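/- Let X ⊂ P^d (d ≥ 2) be the degree-d rational normal curve, and let q ∈ P^d \ X have X-rank equal to d/2 + 1 with d even (so r_X(q) equals the border rank). If S and S' are two distinct subsets of X of cardinality d/2 + 1 whose spans contain q, then ⟨S⟩ ∩ ⟨S'⟩ = {q}; in particular S ∩ S' = ∅. -/

import Mathlib

open scoped LinearAlgebra.Projectivization
open Projectivization Polynomial

noncomputable section

variable {k : Type} [Field k]

/-- Projective space of the vector space of functions `ι → k`. -/
abbrev PJ (k : Type) [Field k] (ι : Type) := ℙ k (ι → k)

/-- Projective `r`-space `ℙ^r` over `k`. -/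
abbrev PP (k : Type) [Field k] (r : ℕ) := PJ k (Fin (r + 1))

/-- The (projective) linear span of a set of points of projective space. -/
def pspan {ι : Type} (S : Set (PJ k ι)) : Set (PJ k ι) :=
  {p | p.rep ∈ Submodule.span k (Projectivization.rep '' S)}

/-- The `X`-rank of a point `q`: minimal cardinality of a finite subset of `X`
whose linear span contains `q`. -/
def xrank {ι : Type} (X : Set (PJ k ι)) (q : PJ k ι) : ℕ :=
  sInf {n | ∃ S : Finset (PJ k ι), ↑S ⊆ X ∧ S.card = n ∧ q ∈ pspan (↑S : Set (PJ k ι))}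

/-- `𝒮(X,q)`: the set of rank-evincing subsets of `X` for `q`. -/
def rankSets {ι : Type} (X : Set (PJ k ι)) (q : PJ k ι) : Set (Finset (PJ k ι)) :=
  {S | ↑S ⊆ X ∧ S.card = xrank X q ∧ q ∈ pspan (↑S : Set (PJ k ι))}

/-- `W_q := ⋂_{S ∈ 𝒮(X,q)} ⟨S⟩`, the non-uniqueness set of `q`. -/
def Wset {ι : Type} (X : Set (PJ k ι)) (q : PJ k ι) : Set (PJ k ι) :=
  ⋂ S ∈ rankSets X q, pspan (↑S : Set (PJ k ι))

/-- `S` irredundantly spans `q`. -/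
def IrrSpans {ι : Type} (q : PJ k ι) (S : Finset (PJ k ι)) : Prop :=
  q ∈ pspan (↑S : Set (PJ k ι)) ∧ ∀ S' : Finset (PJ k ι), S' ⊂ S → q ∉ pspan (↑S' : Set (PJ k ι))

/-- `𝒮(X,q,t)`: cardinality-`t` subsets of `X` irredundantly spanning `q`. -/
def irrSets {ι : Type} (X : Set (PJ k ι)) (q : PJ k ι) (t : ℕ) : Set (Finset (PJ k ι)) :=
  {S | ↑S ⊆ X ∧ S.card = t ∧ IrrSpans q S}

/-- `W_{q,t} := ⋂_{S ∈ 𝒮(X,q,t)} ⟨S⟩` (equal to the whole space when `𝒮(X,q,t) = ∅`). -/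
def WsetT {ι : Type} (X : Set (PJ k ι)) (q : PJ k ι) (t : ℕ) : Set (PJ k ι) :=
  ⋂ S ∈ irrSets X q t, pspan (↑S : Set (PJ k ι))

/-- Common zero locus in projective space of a set of (homogeneous) polynomials. -/
def zLocus {ι : Type} (T : Set (MvPolynomial ι k)) : Set (PJ k ι) :=
  {p | ∀ f ∈ T, MvPolynomial.eval p.rep f = 0}

/-- Zariski-closed subsets of projective space. -/
def ZClosed {ι : Type} (C : Set (PJ k ι)) : Prop :=
  ∃ T : Set (MvPolynomial ι k), (∀ f ∈ T, ∃ n, f.IsHomogeneous n) ∧ C = zLocus T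

/-- Zariski-open subsets of projective space. -/
def ZOpen {ι : Type} (U : Set (PJ k ι)) : Prop := ZClosed Uᶜ

/-- Irreducibility of a set for the Zariski topology. -/
def ZIrred {ι : Type} (C : Set (PJ k ι)) : Prop :=
  C.Nonempty ∧ ∀ C₁ C₂ : Set (PJ k ι), ZClosed C₁ → ZClosed C₂ → C ⊆ C₁ ∪ C₂ →
    C ⊆ C₁ ∨ C ⊆ C₂

/-- An integral (i.e. reduced and irreducible, here: irreducible closed) subvariety. -/
def IsVariety {ι : Type} (X : Set (PJ k ι)) : Prop := ZClosed X ∧ ZIrred X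

/-- Non-degenerate: not contained in any hyperplane. -/
def Nondeg {ι : Type} (X : Set (PJ k ι)) : Prop := pspan X = Set.univ

/-- Zariski closure. -/
def zClosure {ι : Type} (S : Set (PJ k ι)) : Set (PJ k ι) :=
  ⋂₀ {C | ZClosed C ∧ S ⊆ C}

/-- The `b`-th secant variety of `X`. -/
def secantVar {ι : Type} (X : Set (PJ k ι)) (b : ℕ) : Set (PJ k ι) :=
  zClosure (⋃ S ∈ {S : Finset (PJ k ι) | ↑S ⊆ X ∧ S.card = b}, pspan (↑S : Set (PJ k ι)))

/-- The border `X`-rank of `q`. -/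
def borderRank {ι : Type} (X : Set (PJ k ι)) (q : PJ k ι) : ℕ :=
  sInf {b | 0 < b ∧ q ∈ secantVar X b}

/-- Dimension of a set: sup of lengths of chains of irreducible closed subsets. -/
def varDim {ι : Type} (X : Set (PJ k ι)) : ℕ :=
  sSup {n | ∃ c : Fin (n + 1) → Set (PJ k ι), StrictMono c ∧
    (∀ i, ZClosed (c i) ∧ ZIrred (c i)) ∧ ∀ i, c i ⊆ X}

/-- The vector-space dimension of the linear span of a set of projective points
(the projective dimension is this number minus `1`). -/
def sdim {ι : Type} (T : Set (PJ k ι)) : ℕ :=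
  Module.finrank k (Submodule.span k (Projectivization.rep '' T))

/-- A projective linear subspace whose underlying linear subspace has dimension `m`. -/
def IsLinSub {ι : Type} (m : ℕ) (L : Set (PJ k ι)) : Prop :=
  ∃ W : Submodule k (ι → k), Module.finrank k W = m ∧ L = {p | p.rep ∈ W}

/-- A line in projective space. -/
def IsLine {ι : Type} (L : Set (PJ k ι)) : Prop := IsLinSub 2 L

/-- A hyperplane in `ℙ^r`. -/
def IsHyperplane {r : ℕ} (H : Set (PP k r)) : Prop := IsLinSub r H

/-- The standard vector of monomials defining the rational normal curve. -/
def rncVec (d : ℕ) (a b : k) : Fin (d + 1) → k := fun i => a ^ (d - (i : ℕ)) * b ^ (i : ℕ)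

/-- The degree-`d` rational normal curve in `ℙ^d` (image of the `d`-th Veronese of `ℙ^1`). -/
def rnc (d : ℕ) : Set (PP k d) :=
  {p | ∃ a b c : k, ¬(a = 0 ∧ b = 0) ∧ c ≠ 0 ∧ p.rep = c • rncVec d a b}

/-- The linear span of the degree-`b` zero-dimensional subscheme of the degree-`d`
rational normal curve corresponding to a nonzero binary form with coefficients `g`
(points of the span are exactly the sequences satisfying the associated linear recurrence). -/
def schemeSpan (d b : ℕ) (g : Fin (b + 1) → k) : Set (PP k d) :=
  {p | ∀ i : ℕ, ∀ _h : i + b ≤ d,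
    ∑ j : Fin (b + 1), g j * p.rep ⟨i + (j : ℕ), by have := j.isLt; omega⟩ = 0}

/-- The cactus rank of a point of `ℙ^d` with respect to the rational normal curve:
minimal degree of a zero-dimensional subscheme of the curve whose span contains `q`. -/
def cactusRank (d : ℕ) (q : PP k d) : ℕ :=
  sInf {b | ∃ g : Fin (b + 1) → k, g ≠ 0 ∧ q ∈ schemeSpan d b g}

/-- A property `P` holds for a general `m`-tuple of points of projective space:
it holds away from the zero locus of some nonzero multihomogeneous polynomial. -/
def GenlHolds {ι : Type} (m : ℕ) (P : (Fin m → PJ k ι) → Prop) : Prop :=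
  ∃ F : MvPolynomial (Fin m × ι) k, F ≠ 0 ∧
    ∀ u : Fin m → PJ k ι,
      MvPolynomial.eval (fun x => (u x.1).rep x.2) F ≠ 0 → P u

/-- A property `P` holds for a general `m`-tuple of points of `X`. -/
def GenlHoldsOn {ι : Type} (X : Set (PJ k ι)) (m : ℕ) (P : (Fin m → PJ k ι) → Prop) : Prop :=
  ∃ F : MvPolynomial (Fin m × ι) k,
    (∃ u : Fin m → PJ k ι, (∀ i, u i ∈ X) ∧
      MvPolynomial.eval (fun x => (u x.1).rep x.2) F ≠ 0) ∧
    ∀ u : Fin m → PJ k ι, (∀ i, u i ∈ X) →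
      MvPolynomial.eval (fun x => (u x.1).rep x.2) F ≠ 0 → P u

/-- Degree-`t` forms vanishing on a set of projective points. -/
def vanishSub {ι : Type} (T : Set (PJ k ι)) : Submodule k (MvPolynomial ι k) :=
  ⨅ p ∈ T, LinearMap.ker (MvPolynomial.aeval (R := k) (Projectivization.rep p)).toLinearMap

/-- `h⁰(𝓘_T(t))`: dimension of the space of degree-`t` forms vanishing on `T`. -/
def h0 {ι : Type} (t : ℕ) (T : Set (PJ k ι)) : ℕ :=
  Module.finrank k ↥(MvPolynomial.homogeneousSubmodule ι k t ⊓ vanishSub T)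

/-- `h¹(𝓘_S(d))` for a finite set of points `S`: the failure of `S` to impose
independent conditions on degree-`d` forms. -/
def h1I {ι : Type} (S : Finset (PJ k ι)) (d : ℕ) : ℕ :=
  S.card - (Module.finrank k ↥(MvPolynomial.homogeneousSubmodule ι k d) - h0 d (↑S : Set (PJ k ι)))

/-- Index type for the coordinates of the degree-`d` Veronese embedding of `ℙ^n`:
exponent vectors of total degree `d` (there are `(n+d choose n)` of them). -/
def ExpIdx (n d : ℕ) : Type := {m : Fin (n + 1) → ℕ // ∑ i, m i = d}

/-- The vector of all degree-`d` monomials evaluated at `u`. -/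
def verVec (n d : ℕ) (u : Fin (n + 1) → k) : ExpIdx n d → k := fun m => ∏ i, u i ^ m.1 i

lemma verVec_ne_zero {n d : ℕ} {u : Fin (n + 1) → k} (hu : u ≠ 0) :
    verVec (k := k) n d u ≠ 0 := by
  obtain ⟨i, hi⟩ := Function.ne_iff.mp hu
  intro h
  have hm : (∑ j, if j = i then d else 0) = d := by simp
  have h0 := congrFun h ⟨fun j => if j = i then d else 0, hm⟩
  simp only [verVec, Pi.zero_apply] at h0
  rw [Finset.prod_eq_single i (fun b _ hb => by simp [hb]) (by simp)] at h0
  simp only [if_pos rfl] at h0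
  change u i ^ d = 0 at h0
  rcases eq_or_ne d 0 with hd | hd
  · rw [hd] at h0; simp at h0
  · exact hi ((pow_eq_zero_iff hd).mp h0)

/-- The degree-`d` Veronese embedding `ν_d : ℙ^n → ℙ^r`, `r = (n+d choose n) - 1`. -/
def nud (n d : ℕ) (p : PP k n) : PJ k (ExpIdx n d) :=
  Projectivization.mk k (verVec n d p.rep) (verVec_ne_zero p.rep_nonzero)


-- dual linear functional given by a polynomial
def phiF (d : ℕ) (P : Polynomial k) (v : Fin (d+1) → k) : k :=
  ∑ i : Fin (d + 1), P.coeff (d - (i : ℕ)) * v i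

lemma phiF_zero (d : ℕ) (P : Polynomial k) : phiF d P 0 = 0 := by simp [phiF]

lemma phiF_smul (d : ℕ) (P : Polynomial k) (c : k) (v : Fin (d+1) → k) :
    phiF d P (c • v) = c * phiF d P v := by
  simp [phiF, Finset.mul_sum, mul_left_comm]

lemma phiF_sum {ι : Type*} (d : ℕ) (P : Polynomial k) (s : Finset ι) (g : ι → k)
    (v : ι → Fin (d+1) → k) :
    phiF d P (∑ p ∈ s, g p • v p) = ∑ p ∈ s, g p * phiF d P (v p) := by
  simp only [phiF, Finset.sum_apply, Pi.smul_apply, smul_eq_mul, Finset.mul_sum]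
  rw [Finset.sum_comm]
  exact Finset.sum_congr rfl fun p _ => Finset.sum_congr rfl fun i _ => by ring

lemma phiF_rncVec {d : ℕ} {P : Polynomial k} (hP : P.natDegree ≤ d) {a b : k} (hb : b ≠ 0) :
    phiF d P (rncVec d a b) = b ^ d * P.eval (a / b) := by
  rw [Polynomial.eval_eq_sum_range' (Nat.lt_succ_of_le hP), Finset.mul_sum]
  unfold phiF rncVec
  rw [Fin.sum_univ_eq_sum_range (fun i => P.coeff (d - i) * (a ^ (d - i) * b ^ i)) (d+1),
    ← Finset.sum_range_reflect]
  refine Finset.sum_congr rfl fun j hj => ?_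
  have hj' : j ≤ d := Nat.lt_succ_iff.mp (Finset.mem_range.mp hj)
  have h1 : d + 1 - 1 - j = d - j := by omega
  have h2 : d - (d - j) = j := by omega
  have h3 : b ^ d = b ^ (d - j) * b ^ j := by rw [← pow_add]; congr 1; omega
  rw [h1, h2, h3, div_pow]
  field_simp

lemma phiF_rncVec_inf {d : ℕ} (P : Polynomial k) (a : k) :
    phiF d P (rncVec d a 0) = P.coeff d * a ^ d := by
  unfold phiF rncVec
  rw [Finset.sum_eq_single (0 : Fin (d+1))]
  · simp
  · intro i _ hi
    have : (i : ℕ) ≠ 0 := fun h => hi (Fin.ext h)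
    simp [zero_pow this]
  · simp

lemma rncVec_smul (d : ℕ) (l a b : k) :
    rncVec d (l * a) (l * b) = l ^ d • rncVec d a b := by
  funext i
  have he : (d - (i : ℕ)) + (i : ℕ) = d := Nat.sub_add_cancel (Nat.lt_succ_iff.mp i.isLt)
  rw [Pi.smul_apply, smul_eq_mul]
  show (l * a) ^ (d - (i:ℕ)) * (l * b) ^ (i:ℕ) = l ^ d * (a ^ (d - (i:ℕ)) * b ^ (i:ℕ))
  have h2 : l ^ (d - (i:ℕ)) * l ^ (i:ℕ) = l ^ d := by rw [← pow_add, he]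
  rw [mul_pow, mul_pow, ← h2]
  ring

lemma proj_eq_of_smul {d : ℕ} {p p' : PP k d} {μ : k} (hμ : μ ≠ 0)
    (h : p'.rep = μ • p.rep) : p' = p := by
  rw [← Projectivization.mk_rep p', ← Projectivization.mk_rep p,
    Projectivization.mk_eq_mk_iff]
  exact ⟨Units.mk0 μ hμ, by simp [Units.smul_def, h]⟩

lemma rnc_eq_of_cross {d : ℕ} {p p' : PP k d} {a b c a' b' c' : k}
    (h1 : ¬(a = 0 ∧ b = 0)) (hc : c ≠ 0) (hp : p.rep = c • rncVec d a b)
    (h1' : ¬(a' = 0 ∧ b' = 0)) (hc' : c' ≠ 0) (hp' : p'.rep = c' • rncVec d a' b')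
    (hcross : a * b' = a' * b) : p' = p := by
  obtain ⟨l, hl, ha', hb'⟩ : ∃ l : k, l ≠ 0 ∧ a' = l * a ∧ b' = l * b := by
    by_cases hb : b = 0
    · have ha : a ≠ 0 := fun h => h1 ⟨h, hb⟩
      have hb'0 : b' = 0 := by
        have := hcross; rw [hb, mul_zero] at this
        rcases mul_eq_zero.mp this with h | h
        · exact absurd h ha
        · exact h
      have ha' : a' ≠ 0 := fun h => h1' ⟨h, hb'0⟩
      exact ⟨a' / a, div_ne_zero ha' ha, by field_simp, by rw [hb, hb'0, mul_zero]⟩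
    · have hb'0 : b' ≠ 0 := by
        intro h
        rw [h, mul_zero] at hcross
        rcases mul_eq_zero.mp hcross.symm with h' | h'
        · exact h1' ⟨h', h⟩
        · exact hb h'
      refine ⟨b' / b, div_ne_zero hb'0 hb, ?_, by field_simp⟩
      field_simp
      rw [← hcross]; ring
  have : p'.rep = (c' * l ^ d / c) • p.rep := by
    rw [hp', ha', hb', rncVec_smul, hp, smul_smul, smul_smul]
    congr 1
    field_simp
  exact proj_eq_of_smul (div_ne_zero (mul_ne_zero hc' (pow_ne_zero d hl)) hc) this

lemma rnc_indep {d : ℕ} (T : Finset (PP k d)) (hT : ↑T ⊆ rnc (k := k) d)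
    (hc : T.card ≤ d + 1) :
    LinearIndependent k (fun p : (T : Set (PP k d)) => (p : PP k d).rep) := by
  classical
  rw [Fintype.linearIndependent_iff]
  intro g hg p₀
  have hdata : ∀ p : (T : Set (PP k d)), ∃ a b c : k,
      ¬(a = 0 ∧ b = 0) ∧ c ≠ 0 ∧ (p : PP k d).rep = c • rncVec d a b :=
    fun p => hT p.2
  choose A B C h1 h2 h3 using hdata
  have hkey : ∀ p p' : (T : Set (PP k d)), A p * B p' = A p' * B p → p' = p := by
    intro p p' hcross
    exact Subtype.ext (rnc_eq_of_cross (h1 p) (h2 p) (h3 p) (h1 p') (h2 p') (h3 p') hcross)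
  have hcardT : Fintype.card (T : Set (PP k d)) = T.card := by
    simpa using Set.ncard_coe_Finset T
  have hT1 : 1 ≤ T.card := by
    have := p₀.2
    exact Finset.card_pos.mpr ⟨p₀.1, this⟩
  by_cases hB : B p₀ = 0
  · -- p₀ is the point at infinity
    have hA0 : A p₀ ≠ 0 := fun h => h1 p₀ ⟨h, hB⟩
    have hother : ∀ p, p ≠ p₀ → B p ≠ 0 := by
      intro p hp hBp
      exact hp (hkey p₀ p (by rw [hB, hBp, mul_zero, mul_zero]))
    set P : Polynomial k :=
      X ^ (d + 1 - T.card) *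
        ∏ p ∈ Finset.univ.erase p₀, (X - Polynomial.C (A p / B p)) with hPdef
    have hmonic : P.Monic :=
      (monic_X_pow _).mul (monic_prod_of_monic _ _ fun p _ => monic_X_sub_C _)
    have hdeg : P.natDegree = d := by
      rw [hPdef, (monic_X_pow _).natDegree_mul
        (monic_prod_of_monic _ _ fun p _ => monic_X_sub_C _),
        natDegree_X_pow, natDegree_prod_of_monic _ _ fun p _ => monic_X_sub_C _]
      simp only [natDegree_X_sub_C, Finset.sum_const, smul_eq_mul, mul_one]
      rw [Finset.card_erase_of_mem (Finset.mem_univ _), Finset.card_univ, hcardT]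
      omega
    have hval := congrArg (phiF d P) hg
    rw [phiF_sum, phiF_zero] at hval
    rw [Finset.sum_eq_single p₀] at hval
    · have hco1 : P.coeff d = 1 := by rw [← hdeg]; exact hmonic.coeff_natDegree
      rw [h3 p₀, phiF_smul, hB, phiF_rncVec_inf, hco1] at hval
      have hne0 : C p₀ * (1 * A p₀ ^ d) ≠ 0 :=
        mul_ne_zero (h2 p₀) (by simpa using pow_ne_zero d hA0)
      exact (mul_eq_zero.mp hval).resolve_right hne0
    · intro p _ hp
      rw [h3 p, phiF_smul, phiF_rncVec hdeg.le (hother p hp)]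
      have heval : P.eval (A p / B p) = 0 := by
        rw [hPdef, eval_mul, eval_prod]
        rw [Finset.prod_eq_zero (Finset.mem_erase.mpr ⟨hp, Finset.mem_univ _⟩)
          (by simp)]
        ring
      rw [heval]
      ring
    · simp
  · -- p₀ is a finite point
    set P : Polynomial k :=
      ∏ p ∈ (Finset.univ.erase p₀).filter (fun p => B p ≠ 0),
        (X - Polynomial.C (A p / B p)) with hPdef
    have hmonic : P.Monic := monic_prod_of_monic _ _ fun p _ => monic_X_sub_C _
    have hdeg : P.natDegree =
        ((Finset.univ.erase p₀).filter (fun p => B p ≠ 0)).card := by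
      rw [hPdef, natDegree_prod_of_monic _ _ fun p _ => monic_X_sub_C _]
      simp [natDegree_X_sub_C]
    have hdegle : P.natDegree ≤ d := by
      rw [hdeg]
      calc ((Finset.univ.erase p₀).filter (fun p => B p ≠ 0)).card
          ≤ (Finset.univ.erase p₀).card := Finset.card_filter_le _ _
        _ = T.card - 1 := by
            rw [Finset.card_erase_of_mem (Finset.mem_univ _), Finset.card_univ, hcardT]
        _ ≤ d := by omega
    have hval := congrArg (phiF d P) hg
    rw [phiF_sum, phiF_zero] at hval
    rw [Finset.sum_eq_single p₀] at hval
    · rw [h3 p₀, phiF_smul, phiF_rncVec hdegle hB] at hval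
      have heval : P.eval (A p₀ / B p₀) ≠ 0 := by
        rw [hPdef, eval_prod]
        apply Finset.prod_ne_zero_iff.mpr
        intro p hp
        simp only [eval_sub, eval_X, eval_C]
        rw [sub_ne_zero]
        intro hteq
        have hBp : B p ≠ 0 := (Finset.mem_filter.mp hp).2
        have hpne : p ≠ p₀ := (Finset.mem_erase.mp (Finset.mem_filter.mp hp).1).1
        apply hpne
        apply hkey p₀ p
        exact (div_eq_div_iff hB hBp).mp hteq
      have hne0 : C p₀ * (B p₀ ^ d * P.eval (A p₀ / B p₀)) ≠ 0 :=
        mul_ne_zero (h2 p₀) (mul_ne_zero (pow_ne_zero d hB) heval)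
      exact (mul_eq_zero.mp hval).resolve_right hne0
    · intro p _ hp
      rw [h3 p, phiF_smul]
      by_cases hBp : B p = 0
      · rw [hBp, phiF_rncVec_inf]
        have hco : P.coeff d = 0 := by
          apply coeff_eq_zero_of_natDegree_lt
          rw [hdeg]
          have hsub : (Finset.univ.erase p₀).filter (fun p' => B p' ≠ 0) ⊆
              (Finset.univ.erase p).erase p₀ := by
            intro x hx
            rcases Finset.mem_filter.mp hx with ⟨hx1, hx2⟩
            rcases Finset.mem_erase.mp hx1 with ⟨hx3, _⟩
            exact Finset.mem_erase.mpr ⟨hx3,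
              Finset.mem_erase.mpr ⟨fun h => hx2 (by rw [h]; exact hBp), Finset.mem_univ _⟩⟩
          calc ((Finset.univ.erase p₀).filter (fun p' => B p' ≠ 0)).card
              ≤ ((Finset.univ.erase p).erase p₀).card := Finset.card_le_card hsub
            _ = T.card - 2 := by
                rw [Finset.card_erase_of_mem
                    (Finset.mem_erase.mpr ⟨fun h => hB (by rw [h]; exact hBp), Finset.mem_univ _⟩),
                  Finset.card_erase_of_mem (Finset.mem_univ _), Finset.card_univ, hcardT]
                omega
            _ < d := by
                have h2T : 2 ≤ T.card := by
                  rw [← hcardT]; exact Fintype.one_lt_card_iff.mpr ⟨p, p₀, hp⟩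
                omega
        rw [hco]
        ring
      · rw [phiF_rncVec hdegle hBp]
        have heval : P.eval (A p / B p) = 0 := by
          rw [hPdef, eval_prod]
          exact Finset.prod_eq_zero
            (Finset.mem_filter.mpr ⟨Finset.mem_erase.mpr ⟨hp, Finset.mem_univ _⟩, hBp⟩)
            (by simp)
        rw [heval]
        ring
    · simp

lemma span_rep_finrank {d : ℕ} (T : Finset (PP k d)) (hT : ↑T ⊆ rnc (k := k) d)
    (hc : T.card ≤ d + 1) :
    Module.finrank k (Submodule.span k
      (Projectivization.rep '' (T : Set (PP k d)))) = T.card := by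
  rw [Set.image_eq_range, finrank_span_eq_card (rnc_indep T hT hc)]
  simpa using Set.ncard_coe_Finset T

/-- on the rational normal curve of even degree `d`, for a point `q ∉ X`
of rank `d/2 + 1`, two distinct spanning sets of that cardinality satisfy
`⟨S⟩ ∩ ⟨S'⟩ = {q}` and `S ∩ S' = ∅`. -/
theorem statement3 {k : Type} [Field k] [IsAlgClosed k] {d : ℕ}
    [DecidableEq (PP k d)] (hd : 2 ≤ d) (hde : Even d)
    (q : PP k d) (hq : q ∉ rnc (k := k) d) (hrk : xrank (rnc (k := k) d) q = d / 2 + 1)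
    (S S' : Finset (PP k d)) (hS : ↑S ⊆ rnc (k := k) d) (hS' : ↑S' ⊆ rnc (k := k) d)
    (hcS : S.card = d / 2 + 1) (hcS' : S'.card = d / 2 + 1) (hne : S ≠ S')
    (hqS : q ∈ pspan (↑S : Set (PP k d))) (hqS' : q ∈ pspan (↑S' : Set (PP k d))) :
    pspan (↑S : Set (PP k d)) ∩ pspan (↑S' : Set (PP k d)) = {q} ∧ S ∩ S' = ∅ := by
  classical
  have hd2 : d % 2 = 0 := Nat.even_iff.mp hde
  set n := d / 2 + 1 with hn
  set U := Submodule.span k (Projectivization.rep '' (S : Set (PP k d))) with hU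
  set U' := Submodule.span k (Projectivization.rep '' (S' : Set (PP k d))) with hU'
  have hqU : q.rep ∈ U := hqS
  have hqU' : q.rep ∈ U' := hqS'
  have hfrU : Module.finrank k U = n := by
    rw [hU, span_rep_finrank S hS (by omega), hcS]
  have hfrU' : Module.finrank k U' = n := by
    rw [hU', span_rep_finrank S' hS' (by omega), hcS']
  have hUn : (↑(S ∪ S') : Set (PP k d)) ⊆ rnc (k := k) d := by
    rw [Finset.coe_union]; exact Set.union_subset hS hS'
  have hsup : U ⊔ U' = Submodule.span k
      (Projectivization.rep '' ((S ∪ S' : Finset (PP k d)) : Set (PP k d))) := by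
    rw [hU, hU', Finset.coe_union, Set.image_union, Submodule.span_union]
  have hform := Submodule.finrank_sup_add_finrank_inf_eq U U'
  by_cases hI : S ∩ S' = ∅
  · -- the two spans intersect exactly in q
    refine ⟨?_, hI⟩
    have hcard_union : (S ∪ S').card = d + 2 := by
      have h := Finset.card_union_add_card_inter S S'
      rw [hI, Finset.card_empty, hcS, hcS'] at h
      omega
    obtain ⟨T', hT'sub, hT'card⟩ := Finset.exists_subset_card_eq (s := S ∪ S') (n := d + 1) (by omega)
    have hT'rnc : (↑T' : Set (PP k d)) ⊆ rnc (k := k) d :=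
      Set.Subset.trans (Finset.coe_subset.mpr hT'sub) hUn
    have hfrsup_ge : d + 1 ≤ Module.finrank k ↥(U ⊔ U') := by
      have hle : Submodule.span k (Projectivization.rep '' (T' : Set (PP k d))) ≤ U ⊔ U' := by
        rw [hsup]
        exact Submodule.span_mono (Set.image_mono (Finset.coe_subset.mpr hT'sub))
      have := Submodule.finrank_mono hle
      rwa [span_rep_finrank T' hT'rnc (le_of_eq hT'card), hT'card] at this
    have hfrsup_le : Module.finrank k ↥(U ⊔ U') ≤ d + 1 := by
      have h1 := Submodule.finrank_le (U ⊔ U')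
      have h2 : Module.finrank k (Fin (d + 1) → k) = d + 1 := by
        rw [Module.finrank_pi]; simp
      omega
    have hfrinf : Module.finrank k ↥(U ⊓ U') = 1 := by omega
    have hqmem : q.rep ∈ U ⊓ U' := Submodule.mem_inf.mpr ⟨hqU, hqU'⟩
    have hspanq : Submodule.span k {q.rep} = U ⊓ U' := by
      apply Submodule.eq_of_le_of_finrank_le
      · exact (Submodule.span_singleton_le_iff_mem _ _).mpr hqmem
      · rw [finrank_span_singleton q.rep_nonzero, hfrinf]
    ext p
    simp only [Set.mem_inter_iff, Set.mem_singleton_iff]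
    constructor
    · rintro ⟨hp1, hp2⟩
      have hpm : p.rep ∈ U ⊓ U' := Submodule.mem_inf.mpr ⟨hp1, hp2⟩
      rw [← hspanq, Submodule.mem_span_singleton] at hpm
      obtain ⟨c, hcdef⟩ := hpm
      have hc0 : c ≠ 0 := by
        rintro rfl
        rw [zero_smul] at hcdef
        exact p.rep_nonzero hcdef.symm
      exact proj_eq_of_smul hc0 hcdef.symm
    · rintro rfl
      exact ⟨hqS, hqS'⟩
  · -- impossible: the sets would share a point, contradicting minimality of the rank
    exfalso
    have hIne : (S ∩ S').Nonempty := Finset.nonempty_iff_ne_empty.mpr hI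
    have hIpos : 0 < (S ∩ S').card := Finset.card_pos.mpr hIne
    have hcard_union : (S ∪ S').card + (S ∩ S').card = n + n := by
      rw [Finset.card_union_add_card_inter, hcS, hcS']
    have hcu : (S ∪ S').card ≤ d + 1 := by omega
    have hfrsup : Module.finrank k ↥(U ⊔ U') = (S ∪ S').card := by
      rw [hsup, span_rep_finrank _ hUn hcu]
    have hfrinf : Module.finrank k ↥(U ⊓ U') = (S ∩ S').card := by omega
    have hIsubS : S ∩ S' ⊆ S := Finset.inter_subset_left
    have hIsubS' : S ∩ S' ⊆ S' := Finset.inter_subset_right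
    have hIle : Submodule.span k (Projectivization.rep '' ((S ∩ S' : Finset (PP k d)) :
        Set (PP k d))) ≤ U ⊓ U' :=
      le_inf (Submodule.span_mono (Set.image_mono (Finset.coe_subset.mpr hIsubS)))
        (Submodule.span_mono (Set.image_mono (Finset.coe_subset.mpr hIsubS')))
    have hIrnc : (↑(S ∩ S') : Set (PP k d)) ⊆ rnc (k := k) d :=
      Set.Subset.trans (Finset.coe_subset.mpr hIsubS) hS
    have hIcardle : (S ∩ S').card ≤ n := by
      rw [← hcS]; exact Finset.card_le_card hIsubS
    have hIeq : Submodule.span k (Projectivization.rep '' ((S ∩ S' : Finset (PP k d)) :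
        Set (PP k d))) = U ⊓ U' := by
      apply Submodule.eq_of_le_of_finrank_le hIle
      rw [span_rep_finrank _ hIrnc (by omega), hfrinf]
    have hqI : q ∈ pspan ((↑(S ∩ S') : Set (PP k d))) := by
      simp only [pspan, Set.mem_setOf_eq]
      rw [hIeq]
      exact Submodule.mem_inf.mpr ⟨hqU, hqU'⟩
    have hxle : xrank (rnc (k := k) d) q ≤ (S ∩ S').card :=
      Nat.sInf_le ⟨S ∩ S', hIrnc, rfl, hqI⟩
    have hIlt : (S ∩ S').card < n := by
      rcases lt_or_eq_of_le hIcardle with h | h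
      · exact h
      · exfalso
        have h1 : S ∩ S' = S :=
          Finset.eq_of_subset_of_card_le hIsubS (by omega)
        apply hne
        apply Finset.eq_of_subset_of_card_le
        · intro x hx
          have hx2 : x ∈ S ∩ S' := by rw [h1]; exact hx
          exact (Finset.mem_inter.mp hx2).2
        · omega
    rw [hrk] at hxle
    omega

end
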